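/- With the notation of the previous statement, suppose a > 0, b1 > 0 and a·b1 + b2 < 0, and t ≥ 2. Then the function g_t is not convex on ℝ^{I×t}. -/
import Mathlib


/-- If `a > 0`, `b1 > 0` and `a·b1 + b2 < 0`, then (for `t ≥ 2`, `I ≥ 1`) the
closed-form hot-spot temperature `g_t` is not convex. -/
theorem stmt_2 (I : ℕ) (hI : 1 ≤ I) (a b1 b2 : ℝ) (ha : 0 < a) (ha' : a ≤ 1) (hb1 : 0 < b1)
    (hb2 : b2 ≤ 0) (hnconv : a * b1 + b2 < 0) (t : ℕ) (ht : 2 ≤ t) (x0 u0 : ℝ) (c ℓ : ℕ → ℝ) :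
    ¬ ConvexOn ℝ Set.univ (fun v : Fin I → ℕ → ℝ =>
      a ^ t * x0 + b1 * (ℓ t + ∑ i, v i t) ^ 2 + b2 * a ^ (t - 1) * u0 ^ 2
        + (a * b1 + b2) * ∑ t' ∈ Finset.Icc 1 (t - 1),
            a ^ (t' - 1) * (ℓ (t - t') + ∑ i, v i (t - t')) ^ 2
        + ∑ t' ∈ Finset.Icc 1 t, a ^ (t - t') * c t') := by
  intro h
  set i0 : Fin I := ⟨0, hI⟩ with hi0
  set L : ℝ := ℓ (t - 1) with hL
  set p : ℝ → Fin I → ℕ → ℝ := fun s i n => if n = t - 1 ∧ i = i0 then s else 0 with hp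
  have hsum : ∀ (s : ℝ) (n : ℕ), (∑ i, p s i n) = if n = t - 1 then s else 0 := by
    intro s n
    by_cases hn : n = t - 1
    · simp only [hp, hn, true_and, if_pos]
      rw [Finset.sum_ite_eq' Finset.univ i0 (fun _ => s)]
      simp
    · simp [hp, hn]
  -- the Icc split
  have hIcc : Finset.Icc 1 (t - 1) = insert 1 (Finset.Icc 2 (t - 1)) := by
    ext x
    simp only [Finset.mem_Icc, Finset.mem_insert]
    omega
  have h1notin : (1 : ℕ) ∉ Finset.Icc 2 (t - 1) := by simp
  set R : ℝ := ∑ t' ∈ Finset.Icc 2 (t - 1), a ^ (t' - 1) * (ℓ (t - t')) ^ 2 with hR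
  set A : ℝ := a ^ t * x0 + b1 * (ℓ t + 0) ^ 2 + b2 * a ^ (t - 1) * u0 ^ 2
      + (a * b1 + b2) * R + ∑ t' ∈ Finset.Icc 1 t, a ^ (t - t') * c t' with hA
  have hf : ∀ s : ℝ,
      (a ^ t * x0 + b1 * (ℓ t + ∑ i, p s i t) ^ 2 + b2 * a ^ (t - 1) * u0 ^ 2
        + (a * b1 + b2) * ∑ t' ∈ Finset.Icc 1 (t - 1),
            a ^ (t' - 1) * (ℓ (t - t') + ∑ i, p s i (t - t')) ^ 2
        + ∑ t' ∈ Finset.Icc 1 t, a ^ (t - t') * c t')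
      = A + (a * b1 + b2) * (L + s) ^ 2 := by
    intro s
    have h1 : (∑ i, p s i t) = 0 := by
      rw [hsum, if_neg (by omega)]
    have h2 : (∑ t' ∈ Finset.Icc 1 (t - 1),
        a ^ (t' - 1) * (ℓ (t - t') + ∑ i, p s i (t - t')) ^ 2)
        = (L + s) ^ 2 + R := by
      rw [hIcc, Finset.sum_insert h1notin]
      congr 1
      · rw [hsum]
        simp [hL]
      · apply Finset.sum_congr rfl
        intro x hx
        simp only [Finset.mem_Icc] at hx
        rw [hsum, if_neg (by omega)]
        ring
    rw [h1, h2, hA]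
    ring
  -- points
  set s1 : ℝ := 1 - L with hs1
  set s2 : ℝ := -1 - L with hs2
  have hmid : (1/2 : ℝ) • p s1 + (1/2 : ℝ) • p s2 = p (-L) := by
    funext i n
    simp only [Pi.add_apply, Pi.smul_apply, smul_eq_mul, hp]
    split_ifs <;> simp [hs1, hs2] <;> ring
  have hineq := h.2 (Set.mem_univ (p s1)) (Set.mem_univ (p s2))
    (by norm_num : (0:ℝ) ≤ 1/2) (by norm_num : (0:ℝ) ≤ 1/2) (by norm_num)
  rw [hmid] at hineq
  simp only [smul_eq_mul] at hineq
  rw [hf s1, hf s2, hf (-L)] at hineq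
  have e1 : (L + s1) ^ 2 = 1 := by rw [hs1]; ring
  have e2 : (L + s2) ^ 2 = 1 := by rw [hs2]; ring
  have e3 : (L + -L) ^ 2 = 0 := by ring
  rw [e1, e2, e3] at hineq
  nlinarith
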